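/- Let Γ be a cyclic group of order k ≥ 4, let 2 ≤ j ≤ k−2, and let (G,ψ) be a ℤ_k^j-gain tight Γ-gain graph with a free vertex v of degree 3 which has no loop. Let (G₁,ψ₁) and (G₂,ψ₂) be obtained from (G,ψ) by applying two different 1-reductions at v, adding the edges f₁ and f₂ respectively, and suppose that for i = 1,2 the graph (G_i,ψ_i) has a blocker H_i. If E(H₁ ∩ H₂) ≠ ∅, then neither H₁ nor H₂ is a general-count blocker. -/

import Mathlib

open scoped Classical

namespace GR

/-- A finite directed multigraph with edge labels ("gains") in a group `Γ` and a
designated finite set of fixed vertices. -/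
structure GainedGraph (V E Γ : Type) where
  tail : E → V
  head : E → V
  gain : E → Γ
  fixed : Finset V

variable {V E Γ : Type} [DecidableEq V] [DecidableEq E] [Fintype V] [Fintype E] [Group Γ]

/-- A subgraph: a set of vertices and a set of edges whose endpoints lie in the vertex set. -/
structure Subgraph (G : GainedGraph V E Γ) where
  verts : Finset V
  edges : Finset E
  tail_mem : ∀ e ∈ edges, G.tail e ∈ verts
  head_mem : ∀ e ∈ edges, G.head e ∈ verts

namespace Subgraph

variable {G : GainedGraph V E Γ}

instance : Top (Subgraph G) :=
  ⟨⟨Finset.univ, Finset.univ, fun _ _ => Finset.mem_univ _, fun _ _ => Finset.mem_univ _⟩⟩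

instance : LE (Subgraph G) :=
  ⟨fun H K => H.verts ⊆ K.verts ∧ H.edges ⊆ K.edges⟩

def union (H K : Subgraph G) : Subgraph G where
  verts := H.verts ∪ K.verts
  edges := H.edges ∪ K.edges
  tail_mem e he := by
    rcases Finset.mem_union.1 he with h | h
    · exact Finset.mem_union_left _ (H.tail_mem e h)
    · exact Finset.mem_union_right _ (K.tail_mem e h)
  head_mem e he := by
    rcases Finset.mem_union.1 he with h | h
    · exact Finset.mem_union_left _ (H.head_mem e h)
    · exact Finset.mem_union_right _ (K.head_mem e h)

def inter (H K : Subgraph G) : Subgraph G where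
  verts := H.verts ∩ K.verts
  edges := H.edges ∩ K.edges
  tail_mem e he := by
    rcases Finset.mem_inter.1 he with ⟨h1, h2⟩
    exact Finset.mem_inter.2 ⟨H.tail_mem e h1, K.tail_mem e h2⟩
  head_mem e he := by
    rcases Finset.mem_inter.1 he with ⟨h1, h2⟩
    exact Finset.mem_inter.2 ⟨H.head_mem e h1, K.head_mem e h2⟩

/-- Delete a vertex together with all edges incident to it. -/
def deleteVertex (H : Subgraph G) (v : V) : Subgraph G where
  verts := H.verts.erase v
  edges := H.edges.filter fun e => G.tail e ≠ v ∧ G.head e ≠ v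
  tail_mem e he := by
    rcases Finset.mem_filter.1 he with ⟨h1, h2, h3⟩
    exact Finset.mem_erase.2 ⟨h2, H.tail_mem e h1⟩
  head_mem e he := by
    rcases Finset.mem_filter.1 he with ⟨h1, h2, h3⟩
    exact Finset.mem_erase.2 ⟨h3, H.head_mem e h1⟩

/-- Delete an edge. -/
def deleteEdge (H : Subgraph G) (f : E) : Subgraph G where
  verts := H.verts
  edges := H.edges.erase f
  tail_mem e he := H.tail_mem e (Finset.mem_of_mem_erase he)
  head_mem e he := H.head_mem e (Finset.mem_of_mem_erase he)

/-- Add an edge (together with its endpoints). -/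
def addEdge (H : Subgraph G) (f : E) : Subgraph G where
  verts := insert (G.tail f) (insert (G.head f) H.verts)
  edges := insert f H.edges
  tail_mem e he := by
    rcases Finset.mem_insert.1 he with rfl | h
    · exact Finset.mem_insert_self _ _
    · exact Finset.mem_insert_of_mem (Finset.mem_insert_of_mem (H.tail_mem e h))
  head_mem e he := by
    rcases Finset.mem_insert.1 he with rfl | h
    · exact Finset.mem_insert_of_mem (Finset.mem_insert_self _ _)
    · exact Finset.mem_insert_of_mem (Finset.mem_insert_of_mem (H.head_mem e h))

/-- The free vertices of a subgraph. -/
def freeVerts (H : Subgraph G) : Finset V := H.verts \ G.fixed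

/-- The fixed vertices of a subgraph. -/
def fixedVerts (H : Subgraph G) : Finset V := H.verts ∩ G.fixed

end Subgraph

/-- The starting vertex of an oriented traversal of an edge. -/
def stepStart (G : GainedGraph V E Γ) (s : E × Bool) : V :=
  if s.2 then G.tail s.1 else G.head s.1

/-- The ending vertex of an oriented traversal of an edge. -/
def stepEnd (G : GainedGraph V E Γ) (s : E × Bool) : V :=
  if s.2 then G.head s.1 else G.tail s.1

/-- The gain contributed by an oriented traversal of an edge. -/
def stepGain (G : GainedGraph V E Γ) (s : E × Bool) : Γ :=
  if s.2 then G.gain s.1 else (G.gain s.1)⁻¹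

/-- `IsWalk G H L u w` : `L` is a walk in the subgraph `H` from `u` to `w`. -/
def IsWalk (G : GainedGraph V E Γ) (H : Subgraph G) : List (E × Bool) → V → V → Prop
  | [], u, w => u = w ∧ u ∈ H.verts
  | s :: L, u, w => s.1 ∈ H.edges ∧ stepStart G s = u ∧ IsWalk G H L (stepEnd G s) w

/-- The gain of a walk. -/
def walkGain (G : GainedGraph V E Γ) (L : List (E × Bool)) : Γ :=
  (L.map (stepGain G)).prod

/-- The vertices visited by a walk starting at `u`. -/
def walkVerts (G : GainedGraph V E Γ) (u : V) (L : List (E × Bool)) : List V :=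
  u :: L.map (stepEnd G)

/-- `⟨H⟩` : the subgroup of `Γ` generated by the gains of all closed walks in `H`
containing no fixed vertex. -/
def gainGroup (G : GainedGraph V E Γ) (H : Subgraph G) : Subgroup Γ :=
  Subgroup.closure
    {g | ∃ u L, IsWalk G H L u u ∧ (∀ x ∈ walkVerts G u L, x ∉ G.fixed) ∧ walkGain G L = g}

/-- A subgraph is balanced if its gain group is trivial. -/
def Balanced (G : GainedGraph V E Γ) (H : Subgraph G) : Prop := gainGroup G H = ⊥

def Reachable (G : GainedGraph V E Γ) (H : Subgraph G) (u w : V) : Prop :=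
  ∃ L, IsWalk G H L u w

def Connected (G : GainedGraph V E Γ) (H : Subgraph G) : Prop :=
  H.verts.Nonempty ∧ ∀ u ∈ H.verts, ∀ w ∈ H.verts, Reachable G H u w

/-- `v` is a cut-vertex of the subgraph `H`. -/
def IsCutVertex (G : GainedGraph V E Γ) (H : Subgraph G) (v : V) : Prop :=
  v ∈ H.verts ∧ ∃ u ∈ H.verts, ∃ w ∈ H.verts, u ≠ v ∧ w ≠ v ∧
    Reachable G H u w ∧ ¬ Reachable G (H.deleteVertex v) u w

/-- `(2,m,l)`-sparsity of the subgraph `K`. -/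
def Sparse (G : GainedGraph V E Γ) (m l : ℤ) (K : Subgraph G) : Prop :=
  ∀ H : Subgraph G, H ≤ K → H.edges.Nonempty →
    (H.edges.card : ℤ) ≤ 2 * (H.freeVerts.card : ℤ) + m * (H.fixedVerts.card : ℤ) - l

/-- `(2,m,l)`-tightness of the subgraph `K`. -/
def Tight (G : GainedGraph V E Γ) (m l : ℤ) (K : Subgraph G) : Prop :=
  Sparse G m l K ∧
    (K.edges.card : ℤ) = 2 * (K.freeVerts.card : ℤ) + m * (K.fixedVerts.card : ℤ) - l

/-- `(2,m,3,l)`-gain-tightness: `(2,m,l)`-tight and every balanced subgraph with a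
nonempty edge set is `(2,3)`-sparse. -/
def GainTight23 (G : GainedGraph V E Γ) (m l : ℤ) (K : Subgraph G) : Prop :=
  Tight G m l K ∧ ∀ H : Subgraph G, H ≤ K → H.edges.Nonempty → Balanced G H →
    (H.edges.card : ℤ) ≤ 2 * (H.verts.card : ℤ) - 3

/-- The subgraph has no fixed vertex. -/
def NoFixed (G : GainedGraph V E Γ) (H : Subgraph G) : Prop :=
  ∀ x ∈ H.verts, x ∉ G.fixed

/-- Near-balanced with base vertex `v` and gain `δ`: unbalanced, and every closed
walk starting at `v` not containing `v` as an internal vertex has gain `1`, `δ` or `δ⁻¹`. -/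
def NearBalancedAt (G : GainedGraph V E Γ) (H : Subgraph G) (v : V) (δ : Γ) : Prop :=
  ¬ Balanced G H ∧ ∀ L, IsWalk G H L v v →
    (∀ x ∈ (L.map (stepEnd G)).dropLast, x ≠ v) → walkGain G L ∈ ({1, δ, δ⁻¹} : Set Γ)

def NearBalanced (G : GainedGraph V E Γ) (H : Subgraph G) : Prop :=
  NoFixed G H ∧ ∃ v ∈ H.verts, ∃ δ : Γ, NearBalancedAt G H v δ

/-- The gain group of `H` is isomorphic to `ℤ_n`. -/
def IsZIso (G : GainedGraph V E Γ) (H : Subgraph G) (n : ℕ) : Prop :=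
  Nonempty (gainGroup G H ≃* Multiplicative (ZMod n))

def ProperNearBalanced (G : GainedGraph V E Γ) (H : Subgraph G) : Prop :=
  NearBalanced G H ∧ ¬ IsZIso G H 2 ∧ ¬ IsZIso G H 3

/-- The set `S_i(k,j)`. -/
def SSet (k j : ℕ) (i : ℤ) : Set ℕ :=
  {n | 2 ≤ n ∧ n ∣ k ∧ (Odd j → n ≠ 2) ∧ ((j : ZMod n) = (i : ZMod n))}

/-- `H` is `S_i(k,j)`. -/
def IsS (G : GainedGraph V E Γ) (k j : ℕ) (i : ℤ) (H : Subgraph G) : Prop :=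
  ∃ n ∈ SSet k j i, IsZIso G H n

/-- `H` is `S_{±1}(k,j)`. -/
def IsSpm (G : GainedGraph V E Γ) (k j : ℕ) (H : Subgraph G) : Prop :=
  IsS G k j (-1) H ∨ IsS G k j 1 H

/-- The function `α_k^j` on (connected) subgraphs. -/
noncomputable def alpha (G : GainedGraph V E Γ) (k j : ℕ) (X : Subgraph G) : ℤ :=
  if Balanced G X then 0
  else if Odd j ∧ IsZIso G X 2 then 1
  else if IsSpm G k j X then 2 - (X.fixedVerts.card : ℤ)
  else if IsS G k j 0 X ∨ (X.fixedVerts.card = 0 ∧ ProperNearBalanced G X) then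
    2 - 2 * (X.fixedVerts.card : ℤ)
  else 3 - 2 * (X.fixedVerts.card : ℤ)

/-- The subgraph spanned by a set of edges. -/
def edgeSpan (G : GainedGraph V E Γ) (F : Finset E) : Subgraph G where
  verts := F.image G.tail ∪ F.image G.head
  edges := F
  tail_mem e he := Finset.mem_union_left _ (Finset.mem_image_of_mem _ he)
  head_mem e he := Finset.mem_union_right _ (Finset.mem_image_of_mem _ he)

/-- The connected component of the edge `e` in the subgraph spanned by `F`. -/
noncomputable def componentOf (G : GainedGraph V E Γ) (F : Finset E) (e : E) : Subgraph G :=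
  edgeSpan G (F.filter fun f => Reachable G (edgeSpan G F) (G.tail e) (G.tail f))

/-- The connected components of the edge set `F`. -/
noncomputable def components (G : GainedGraph V E Γ) (F : Finset E) : Finset (Subgraph G) :=
  F.image (componentOf G F)

/-- The count `f_k^j(F) = Σ_{X ∈ C(F)} (2|V(X)| − 3 + α_k^j(X))`. -/
noncomputable def fCount (G : GainedGraph V E Γ) (k j : ℕ) (F : Finset E) : ℤ :=
  ∑ X ∈ components G F, (2 * (X.verts.card : ℤ) - 3 + alpha G k j X)

/-- `ℤ_k^j`-gain sparsity. -/
def GainSparseKJ (G : GainedGraph V E Γ) (k j : ℕ) (K : Subgraph G) : Prop :=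
  ∀ H : Subgraph G, H ≤ K → H.edges.Nonempty → (H.edges.card : ℤ) ≤ fCount G k j H.edges

/-- `ℤ_k^j`-gain tightness. -/
def GainTightKJ (G : GainedGraph V E Γ) (k j : ℕ) (K : Subgraph G) : Prop :=
  GainSparseKJ G k j K ∧ (K.edges.card : ℤ) = fCount G k j K.edges

/-- The degree of a vertex in a subgraph (a loop counts twice). -/
def degree (G : GainedGraph V E Γ) (K : Subgraph G) (v : V) : ℕ :=
  (K.edges.filter fun e => G.tail e = v).card + (K.edges.filter fun e => G.head e = v).card

def HasLoopAt (G : GainedGraph V E Γ) (K : Subgraph G) (v : V) : Prop :=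
  ∃ e ∈ K.edges, G.tail e = v ∧ G.head e = v

/-- The neighbours of a vertex in a subgraph. -/
def neighbors (G : GainedGraph V E Γ) (K : Subgraph G) (v : V) : Finset V :=
  ((K.edges.filter fun e => G.tail e = v).image G.head) ∪
    ((K.edges.filter fun e => G.head e = v).image G.tail)

/-- The subgraph `K` satisfies the axioms of a `Γ`-gain graph. -/
structure IsGainGraphOn (G : GainedGraph V E Γ) (K : Subgraph G) : Prop where
  fixed_card : K.fixedVerts.card ≤ 1
  same_dir : ∀ e ∈ K.edges, ∀ f ∈ K.edges, e ≠ f → G.tail e = G.tail f →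
    G.head e = G.head f → G.gain e ≠ G.gain f
  opp_dir : ∀ e ∈ K.edges, ∀ f ∈ K.edges, e ≠ f → G.tail e = G.head f →
    G.head e = G.tail f → G.gain e ≠ (G.gain f)⁻¹
  fixed_not_loop : ∀ e ∈ K.edges, G.tail e = G.head e → G.tail e ∉ G.fixed
  fixed_not_parallel : ∀ e ∈ K.edges, ∀ f ∈ K.edges, e ≠ f →
    (G.tail e ∈ G.fixed ∨ G.head e ∈ G.fixed) →
    ({G.tail e, G.head e} : Finset V) ≠ {G.tail f, G.head f}
  loop_gain : ∀ e ∈ K.edges, G.tail e = G.head e → G.gain e ≠ 1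

/-- `H` together with the vertex `v` and all edges of `G₀` incident to `v`. -/
def addVertexEdges (G : GainedGraph V E Γ) (G₀ H : Subgraph G) (v : V) : Subgraph G where
  verts := (H.verts ∪ {v}) ∪
    ((G₀.edges.filter fun e => G.tail e = v ∨ G.head e = v).image G.tail ∪
      (G₀.edges.filter fun e => G.tail e = v ∨ G.head e = v).image G.head)
  edges := H.edges ∪ G₀.edges.filter fun e => G.tail e = v ∨ G.head e = v
  tail_mem e he := by
    rcases Finset.mem_union.1 he with h | h
    · exact Finset.mem_union_left _ (Finset.mem_union_left _ (H.tail_mem e h))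
    · exact Finset.mem_union_right _ (Finset.mem_union_left _ (Finset.mem_image_of_mem _ h))
  head_mem e he := by
    rcases Finset.mem_union.1 he with h | h
    · exact Finset.mem_union_left _ (Finset.mem_union_left _ (H.head_mem e h))
    · exact Finset.mem_union_right _ (Finset.mem_union_right _ (Finset.mem_image_of_mem _ h))

/-- The result of a 1-reduction at `v` adding the edge `f`: delete `v` and all edges at
`v` and add the edge `f`. -/
def reduceAt (G : GainedGraph V E Γ) (G₀ : Subgraph G) (v : V) (f : E) : Subgraph G where
  verts := insert (G.tail f) (insert (G.head f) (G₀.verts.erase v))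
  edges := insert f (G₀.edges.filter fun e => G.tail e ≠ v ∧ G.head e ≠ v)
  tail_mem e he := by
    rcases Finset.mem_insert.1 he with rfl | h
    · exact Finset.mem_insert_self _ _
    · rcases Finset.mem_filter.1 h with ⟨h1, h2, h3⟩
      exact Finset.mem_insert_of_mem
        (Finset.mem_insert_of_mem (Finset.mem_erase.2 ⟨h2, G₀.tail_mem e h1⟩))
  head_mem e he := by
    rcases Finset.mem_insert.1 he with rfl | h
    · exact Finset.mem_insert_of_mem (Finset.mem_insert_self _ _)
    · rcases Finset.mem_filter.1 h with ⟨h1, h2, h3⟩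
      exact Finset.mem_insert_of_mem
        (Finset.mem_insert_of_mem (Finset.mem_erase.2 ⟨h3, G₀.head_mem e h1⟩))

/-- The new edge `f` arises from a 1-reduction at the vertex `v` of `G₀`: its endpoints are
joined to `v` by two distinct edges of `G₀` and its gain is the gain of the corresponding
path of length two through `v`. -/
def IsOneReduction (G : GainedGraph V E Γ) (G₀ : Subgraph G) (v : V) (f : E) : Prop :=
  f ∉ G₀.edges ∧ G.tail f ≠ v ∧ G.head f ≠ v ∧
    ∃ s₁ s₂ : E × Bool, s₁.1 ∈ G₀.edges ∧ s₂.1 ∈ G₀.edges ∧ s₁.1 ≠ s₂.1 ∧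
      stepEnd G s₁ = v ∧ stepStart G s₂ = v ∧
      G.tail f = stepStart G s₁ ∧ G.head f = stepEnd G s₂ ∧
      G.gain f = stepGain G s₁ * stepGain G s₂

/-- Two labelled edges coincide (up to reorientation with gain inversion). -/
def SameEdge (G : GainedGraph V E Γ) (e f : E) : Prop :=
  (G.tail e = G.tail f ∧ G.head e = G.head f ∧ G.gain e = G.gain f) ∨
    (G.tail e = G.head f ∧ G.head e = G.tail f ∧ G.gain e = (G.gain f)⁻¹)

/-- `H` is a blocker of the 1-reduction at `v` adding the edge `f`. -/
def IsBlocker (G : GainedGraph V E Γ) (k j : ℕ) (G₀ : Subgraph G) (v : V) (f : E)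
    (H : Subgraph G) : Prop :=
  H ≤ G₀ ∧ v ∉ H.verts ∧ G.tail f ∈ H.verts ∧ G.head f ∈ H.verts ∧ H.edges.Nonempty ∧
    Connected G (H.addEdge f) ∧
    (H.edges.card : ℤ) = 2 * (H.verts.card : ℤ) - 3 + alpha G k j (H.addEdge f)

/-- The graph `G` extended by one fresh edge `none` with tail `t`, head `h` and gain `g`. -/
def extendGraph (G : GainedGraph V E Γ) (t h : V) (g : Γ) : GainedGraph V (Option E) Γ where
  tail e := e.elim t G.tail
  head e := e.elim h G.head
  gain e := e.elim g G.gain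
  fixed := G.fixed

/-- The whole original graph `G`, viewed inside the extension. -/
def extendTop (G : GainedGraph V E Γ) (t h : V) (g : Γ) : Subgraph (extendGraph G t h g) where
  verts := Finset.univ
  edges := Finset.univ.image Option.some
  tail_mem _ _ := Finset.mem_univ _
  head_mem _ _ := Finset.mem_univ _

/-- There is an admissible 1-reduction at `v`, i.e. a choice of new edge (with
endpoints and gain coming from a path of length two through `v`) such that the
resulting `Γ`-gain graph is well defined and `ℤ_k^j`-gain tight. -/
def AdmissibleOneReductionExists (G : GainedGraph V E Γ) (k j : ℕ) (v : V) : Prop :=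
  ∃ t h : V, ∃ g : Γ,
    IsOneReduction (extendGraph G t h g) (extendTop G t h g) v none ∧
    IsGainGraphOn (extendGraph G t h g)
      (reduceAt (extendGraph G t h g) (extendTop G t h g) v none) ∧
    GainTightKJ (extendGraph G t h g) k j
      (reduceAt (extendGraph G t h g) (extendTop G t h g) v none)

end GR

namespace GR

set_option linter.unusedVariables false
set_option linter.unusedSectionVars false

section Walks

variable {V E Γ : Type} [DecidableEq V] [DecidableEq E] [Fintype V] [Fintype E] [Group Γ]
variable {G : GainedGraph V E Γ}

lemma stepStart_mem {H : Subgraph G} {s : E × Bool} (hs : s.1 ∈ H.edges) :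
    stepStart G s ∈ H.verts := by
  unfold stepStart
  rcases s with ⟨e, b⟩
  cases b
  · exact H.head_mem e hs
  · exact H.tail_mem e hs

lemma stepEnd_mem {H : Subgraph G} {s : E × Bool} (hs : s.1 ∈ H.edges) :
    stepEnd G s ∈ H.verts := by
  unfold stepEnd
  rcases s with ⟨e, b⟩
  cases b
  · exact H.tail_mem e hs
  · exact H.head_mem e hs

lemma isWalk_start_mem {H : Subgraph G} : ∀ {L : List (E × Bool)} {u w : V},
    IsWalk G H L u w → u ∈ H.verts
  | [], u, w, h => h.1 ▸ h.2
  | s :: L, u, w, h => h.2.1 ▸ stepStart_mem h.1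

lemma isWalk_end_mem {H : Subgraph G} : ∀ {L : List (E × Bool)} {u w : V},
    IsWalk G H L u w → w ∈ H.verts
  | [], u, w, h => h.1 ▸ h.2
  | s :: L, u, w, h => isWalk_end_mem h.2.2

lemma isWalk_mono {H K : Subgraph G} (hHK : H ≤ K) : ∀ {L : List (E × Bool)} {u w : V},
    IsWalk G H L u w → IsWalk G K L u w
  | [], u, w, h => ⟨h.1, hHK.1 h.2⟩
  | s :: L, u, w, h => ⟨hHK.2 h.1, h.2.1, isWalk_mono hHK h.2.2⟩

lemma isWalk_append {H : Subgraph G} : ∀ {L₁ L₂ : List (E × Bool)} {u x w : V},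
    IsWalk G H L₁ u x → IsWalk G H L₂ x w → IsWalk G H (L₁ ++ L₂) u w
  | [], L₂, u, x, w, h1, h2 => h1.1 ▸ h2
  | s :: L, L₂, u, x, w, h1, h2 => ⟨h1.1, h1.2.1, isWalk_append h1.2.2 h2⟩

lemma isWalk_append_right {H : Subgraph G} : ∀ {L₁ L₂ : List (E × Bool)} {u w : V},
    IsWalk G H (L₁ ++ L₂) u w → ∃ x, IsWalk G H L₂ x w
  | [], L₂, u, w, h => ⟨u, h⟩
  | s :: L, L₂, u, w, h => isWalk_append_right h.2.2

def flipStep (s : E × Bool) : E × Bool := (s.1, !s.2)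

lemma stepStart_flip (s : E × Bool) : stepStart G (flipStep s) = stepEnd G s := by
  rcases s with ⟨e, b⟩; cases b <;> rfl

lemma stepEnd_flip (s : E × Bool) : stepEnd G (flipStep s) = stepStart G s := by
  rcases s with ⟨e, b⟩; cases b <;> rfl

lemma stepGain_flip (s : E × Bool) : stepGain G (flipStep s) = (stepGain G s)⁻¹ := by
  rcases s with ⟨e, b⟩; cases b <;> simp [stepGain, flipStep]

def revWalk (L : List (E × Bool)) : List (E × Bool) := (L.map flipStep).reverse

lemma isWalk_revWalk {H : Subgraph G} : ∀ {L : List (E × Bool)} {u w : V},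
    IsWalk G H L u w → IsWalk G H (revWalk L) w u
  | [], u, w, h => ⟨h.1.symm, h.1 ▸ h.2⟩
  | s :: L, u, w, h => by
    have ih := isWalk_revWalk h.2.2
    have hstep : IsWalk G H [flipStep s] (stepEnd G s) u :=
      ⟨h.1, stepStart_flip s, (stepEnd_flip s).trans h.2.1, by
        rw [stepEnd_flip s]; exact stepStart_mem h.1⟩
    have : IsWalk G H (revWalk L ++ [flipStep s]) w u := isWalk_append ih hstep
    simpa [revWalk] using this

lemma walkGain_append (L₁ L₂ : List (E × Bool)) :
    walkGain G (L₁ ++ L₂) = walkGain G L₁ * walkGain G L₂ := by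
  simp [walkGain]

lemma walkGain_revWalk : ∀ (L : List (E × Bool)),
    walkGain (G := G) (revWalk L) = (walkGain G L)⁻¹
  | [] => by simp [walkGain, revWalk]
  | s :: L => by
    have : revWalk (s :: L) = revWalk L ++ [flipStep s] := by simp [revWalk]
    rw [this, walkGain_append, walkGain_revWalk L]
    simp [walkGain, stepGain_flip, mul_inv_rev]

lemma isWalk_ends_subset {H : Subgraph G} : ∀ {L : List (E × Bool)} {u w : V},
    IsWalk G H L u w → ∀ x ∈ L.map (stepEnd G), x ∈ H.verts
  | [], _, _, _ => by simp
  | s :: L, u, w, h => by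
    intro x hx
    rcases List.mem_cons.1 hx with rfl | hx
    · exact stepEnd_mem h.1
    · exact isWalk_ends_subset h.2.2 x hx

lemma isWalk_verts_subset {H : Subgraph G} {L : List (E × Bool)} {u w : V}
    (h : IsWalk G H L u w) : ∀ x ∈ walkVerts G u L, x ∈ H.verts := by
  intro x hx
  rcases List.mem_cons.1 hx with rfl | hx
  · exact isWalk_start_mem h
  · exact isWalk_ends_subset h x hx

end Walks

section ReachComp

variable {V E Γ : Type} [DecidableEq V] [DecidableEq E] [Fintype V] [Fintype E] [Group Γ]
variable {G : GainedGraph V E Γ}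

lemma reachable_refl {H : Subgraph G} {u : V} (hu : u ∈ H.verts) : Reachable G H u u :=
  ⟨[], rfl, hu⟩

lemma reachable_symm {H : Subgraph G} {u w : V} (h : Reachable G H u w) : Reachable G H w u :=
  ⟨revWalk h.choose, isWalk_revWalk h.choose_spec⟩

lemma reachable_trans {H : Subgraph G} {u x w : V} (h1 : Reachable G H u x)
    (h2 : Reachable G H x w) : Reachable G H u w :=
  ⟨h1.choose ++ h2.choose, isWalk_append h1.choose_spec h2.choose_spec⟩

lemma gainGroup_mono {H K : Subgraph G} (hHK : H ≤ K) : gainGroup G H ≤ gainGroup G K := by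
  apply Subgroup.closure_mono
  rintro g ⟨u, L, hw, hfix, hg⟩
  exact ⟨u, L, isWalk_mono hHK hw, hfix, hg⟩

lemma balanced_mono {H K : Subgraph G} (hHK : H ≤ K) (hK : Balanced G K) : Balanced G H :=
  le_bot_iff.1 (hK ▸ gainGroup_mono hHK)

lemma walkGain_mem_gainGroup {H : Subgraph G} {L : List (E × Bool)} {u : V}
    (h : IsWalk G H L u u) (hfix : ∀ x ∈ walkVerts G u L, x ∉ G.fixed) :
    walkGain G L ∈ gainGroup G H :=
  Subgroup.subset_closure ⟨u, L, h, hfix, rfl⟩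

-- components machinery
variable {F : Finset E}

lemma mem_edgeSpan_verts {x : V} :
    x ∈ (edgeSpan G F).verts ↔ ∃ f ∈ F, G.tail f = x ∨ G.head f = x := by
  simp only [edgeSpan, Finset.mem_union, Finset.mem_image]
  constructor
  · rintro (⟨f, hf, rfl⟩ | ⟨f, hf, rfl⟩)
    · exact ⟨f, hf, Or.inl rfl⟩
    · exact ⟨f, hf, Or.inr rfl⟩
  · rintro ⟨f, hf, rfl | rfl⟩
    · exact Or.inl ⟨f, hf, rfl⟩
    · exact Or.inr ⟨f, hf, rfl⟩

lemma reach_endpoint {f : E} (hf : f ∈ F) {x : V} (hx : G.tail f = x ∨ G.head f = x) :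
    Reachable G (edgeSpan G F) (G.tail f) x := by
  rcases hx with rfl | rfl
  · exact reachable_refl (mem_edgeSpan_verts.2 ⟨f, hf, Or.inl rfl⟩)
  · exact ⟨[(f, true)], hf, rfl, rfl, mem_edgeSpan_verts.2 ⟨f, hf, Or.inr rfl⟩⟩

lemma mem_componentOf_edges {e f : E} :
    f ∈ (componentOf G F e).edges ↔
      f ∈ F ∧ Reachable G (edgeSpan G F) (G.tail e) (G.tail f) := by
  simp [componentOf, edgeSpan, Finset.mem_filter]
  exact @Finset.mem_filter _ _ _ _ _

lemma self_mem_componentOf {e : E} (he : e ∈ F) : e ∈ (componentOf G F e).edges :=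
  mem_componentOf_edges.2 ⟨he, reachable_refl (mem_edgeSpan_verts.2 ⟨e, he, Or.inl rfl⟩)⟩

lemma componentOf_eq {e f : E} (h : Reachable G (edgeSpan G F) (G.tail e) (G.tail f)) :
    componentOf G F e = componentOf G F f := by
  unfold componentOf
  congr 1
  ext g
  simp only [Finset.mem_filter, and_congr_right_iff]
  intro hg
  constructor
  · intro h2; exact reachable_trans (reachable_symm h) h2
  · intro h2; exact reachable_trans h h2

lemma mem_componentOf_verts {e : E} {x : V} :
    x ∈ (componentOf G F e).verts ↔
      x ∈ (edgeSpan G F).verts ∧ Reachable G (edgeSpan G F) (G.tail e) x := by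
  constructor
  · intro hx
    have hx' : ∃ f, (f ∈ F ∧ Reachable G (edgeSpan G F) (G.tail e) (G.tail f)) ∧
        (G.tail f = x ∨ G.head f = x) := by
      have := (mem_edgeSpan_verts (F := F.filter fun f =>
        Reachable G (edgeSpan G F) (G.tail e) (G.tail f))).1 hx
      obtain ⟨f, hf, hfx⟩ := this
      exact ⟨f, Finset.mem_filter.1 hf, hfx⟩
    obtain ⟨f, ⟨hfF, hre⟩, hfx⟩ := hx'
    exact ⟨mem_edgeSpan_verts.2 ⟨f, hfF, hfx⟩,
      reachable_trans hre (reach_endpoint hfF hfx)⟩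
  · rintro ⟨hx, hre⟩
    obtain ⟨f, hfF, hfx⟩ := mem_edgeSpan_verts.1 hx
    have : Reachable G (edgeSpan G F) (G.tail e) (G.tail f) :=
      reachable_trans hre (reachable_symm (reach_endpoint hfF hfx))
    exact (mem_edgeSpan_verts (F := F.filter fun f =>
      Reachable G (edgeSpan G F) (G.tail e) (G.tail f))).2
      ⟨f, Finset.mem_filter.2 ⟨hfF, this⟩, hfx⟩

lemma componentOf_eq_of_common_vert {e e' : E} {x : V}
    (hx : x ∈ (componentOf G F e).verts) (hx' : x ∈ (componentOf G F e').verts) :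
    componentOf G F e = componentOf G F e' := by
  obtain ⟨-, h1⟩ := mem_componentOf_verts.1 hx
  obtain ⟨-, h2⟩ := mem_componentOf_verts.1 hx'
  exact componentOf_eq (reachable_trans h1 (reachable_symm h2))

lemma walk_in_componentOf {e : E} : ∀ {L : List (E × Bool)} {u w : V},
    IsWalk G (edgeSpan G F) L u w → Reachable G (edgeSpan G F) (G.tail e) u →
    IsWalk G (componentOf G F e) L u w
  | [], u, w, h, hr => ⟨h.1, mem_componentOf_verts.2 ⟨h.2, hr⟩⟩
  | s :: L, u, w, h, hr => by
    have hsF : s.1 ∈ F := h.1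
    have hstart : Reachable G (edgeSpan G F) (G.tail s.1) u := by
      rw [← h.2.1]
      apply reach_endpoint hsF
      rcases s with ⟨f, b⟩; cases b
      · exact Or.inr rfl
      · exact Or.inl rfl
    have hedge : s.1 ∈ (componentOf G F e).edges :=
      mem_componentOf_edges.2 ⟨hsF, reachable_trans hr (reachable_symm hstart)⟩
    refine ⟨hedge, h.2.1, walk_in_componentOf h.2.2 ?_⟩
    refine reachable_trans (reachable_trans hr (reachable_symm hstart)) ?_
    apply reach_endpoint hsF
    rcases s with ⟨f, b⟩; cases b
    · exact Or.inl rfl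
    · exact Or.inr rfl

lemma componentOf_connected {e : E} (he : e ∈ F) : Connected G (componentOf G F e) := by
  constructor
  · exact ⟨G.tail e, mem_componentOf_verts.2
      ⟨mem_edgeSpan_verts.2 ⟨e, he, Or.inl rfl⟩,
        reachable_refl (mem_edgeSpan_verts.2 ⟨e, he, Or.inl rfl⟩)⟩⟩
  · intro u hu w hw
    obtain ⟨huS, hru⟩ := mem_componentOf_verts.1 hu
    obtain ⟨hwS, hrw⟩ := mem_componentOf_verts.1 hw
    obtain ⟨L, hL⟩ := reachable_trans (reachable_symm hru) hrw
    exact ⟨L, walk_in_componentOf hL hru⟩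

end ReachComp

section Comps

variable {V E Γ : Type} [DecidableEq V] [DecidableEq E] [Fintype V] [Fintype E] [Group Γ]
variable {G : GainedGraph V E Γ} {F : Finset E}

lemma components_mem {X : Subgraph G} (hX : X ∈ components G F) :
    ∃ e ∈ F, X = componentOf G F e := by
  obtain ⟨e, he, rfl⟩ := Finset.mem_image.1 hX
  exact ⟨e, he, rfl⟩

lemma componentOf_mem_components {e : E} (he : e ∈ F) :
    componentOf G F e ∈ components G F := Finset.mem_image_of_mem _ he

lemma components_verts_subset {X : Subgraph G} (hX : X ∈ components G F) :
    X.verts ⊆ (edgeSpan G F).verts := by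
  obtain ⟨e, he, rfl⟩ := components_mem hX
  intro x hx
  exact (mem_componentOf_verts.1 hx).1

lemma components_edges_subset {X : Subgraph G} (hX : X ∈ components G F) :
    X.edges ⊆ F := by
  obtain ⟨e, he, rfl⟩ := components_mem hX
  intro f hf
  exact (mem_componentOf_edges.1 hf).1

lemma components_verts_disjoint {X Y : Subgraph G} (hX : X ∈ components G F)
    (hY : Y ∈ components G F) (hne : X ≠ Y) : Disjoint X.verts Y.verts := by
  obtain ⟨e, he, rfl⟩ := components_mem hX
  obtain ⟨e', he', rfl⟩ := components_mem hY
  rw [Finset.disjoint_left]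
  intro x hx hx'
  exact hne (componentOf_eq_of_common_vert hx hx')

lemma components_verts_biUnion :
    (components G F).biUnion (fun X => X.verts) = (edgeSpan G F).verts := by
  ext x
  simp only [Finset.mem_biUnion]
  constructor
  · rintro ⟨X, hX, hx⟩
    exact components_verts_subset hX hx
  · intro hx
    obtain ⟨f, hf, hfx⟩ := mem_edgeSpan_verts.1 hx
    exact ⟨componentOf G F f, componentOf_mem_components hf,
      mem_componentOf_verts.2 ⟨hx, reach_endpoint hf hfx⟩⟩

lemma sum_components_verts_card :
    ∑ X ∈ components G F, X.verts.card = (edgeSpan G F).verts.card := by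
  rw [← components_verts_biUnion]
  exact (Finset.card_biUnion (fun X hX Y hY hne => components_verts_disjoint hX hY hne)).symm

lemma sum_components_fixed_card :
    ∑ X ∈ components G F, X.fixedVerts.card = (edgeSpan G F).fixedVerts.card := by
  have hdisj : ∀ X ∈ components G F, ∀ Y ∈ components G F, X ≠ Y →
      Disjoint (X.verts ∩ G.fixed) (Y.verts ∩ G.fixed) := fun X hX Y hY hne =>
    Finset.disjoint_of_subset_left Finset.inter_subset_left
      (Finset.disjoint_of_subset_right Finset.inter_subset_left
        (components_verts_disjoint hX hY hne))
  have hbi : (components G F).biUnion (fun X => X.verts ∩ G.fixed) =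
      (edgeSpan G F).verts ∩ G.fixed := by
    rw [← components_verts_biUnion]
    ext x
    simp only [Finset.mem_biUnion, Finset.mem_inter]
    constructor
    · rintro ⟨X, hX, hx⟩
      exact ⟨⟨X, hX, hx.1⟩, hx.2⟩
    · rintro ⟨⟨X, hX, hx⟩, hfx⟩
      exact ⟨X, hX, hx, hfx⟩
  unfold Subgraph.fixedVerts
  rw [← hbi]
  exact (Finset.card_biUnion hdisj).symm

lemma components_nonempty (hF : F.Nonempty) : (components G F).Nonempty := by
  obtain ⟨e, he⟩ := hF
  exact ⟨componentOf G F e, componentOf_mem_components he⟩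

end Comps

section AlphaBounds

variable {V E Γ : Type} [DecidableEq V] [DecidableEq E] [Fintype V] [Fintype E] [Group Γ]
variable {G : GainedGraph V E Γ}

lemma alpha_le {k j : ℕ} {X : Subgraph G} (hc : X.fixedVerts.card ≤ 1) :
    alpha G k j X ≤ 3 - 2 * (X.fixedVerts.card : ℤ) := by
  unfold alpha
  split_ifs <;> omega

lemma alpha_nonneg {k j : ℕ} {X : Subgraph G} (hc : X.fixedVerts.card ≤ 1) :
    0 ≤ alpha G k j X := by
  unfold alpha
  split_ifs <;> omega

lemma fCount_le_of_card_le (k j : ℕ)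
    (hc : ∀ X ∈ components G F, X.fixedVerts.card ≤ 1) :
    fCount G k j F ≤ 2 * ((edgeSpan G F).verts.card : ℤ)
      - 2 * ((edgeSpan G F).fixedVerts.card : ℤ) := by
  unfold fCount
  have h1 : ∀ X ∈ components G F,
      2 * (X.verts.card : ℤ) - 3 + alpha G k j X
        ≤ 2 * (X.verts.card : ℤ) - 2 * (X.fixedVerts.card : ℤ) := by
    intro X hX
    have := alpha_le (G := G) (k := k) (j := j) (hc X hX)
    omega
  calc ∑ X ∈ components G F, (2 * (X.verts.card : ℤ) - 3 + alpha G k j X)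
      ≤ ∑ X ∈ components G F,
          (2 * (X.verts.card : ℤ) - 2 * (X.fixedVerts.card : ℤ)) :=
        Finset.sum_le_sum h1
    _ = 2 * ((edgeSpan G F).verts.card : ℤ)
          - 2 * ((edgeSpan G F).fixedVerts.card : ℤ) := by
        rw [Finset.sum_sub_distrib, ← Finset.mul_sum, ← Finset.mul_sum]
        rw [← Nat.cast_sum, ← Nat.cast_sum, sum_components_verts_card,
          sum_components_fixed_card]

end AlphaBounds

section Trim

variable {V E Γ : Type} [DecidableEq V] [DecidableEq E] [Fintype V] [Fintype E] [Group Γ]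
variable {G : GainedGraph V E Γ}

lemma walk_tail_starts {K : Subgraph G} : ∀ {q : List (E × Bool)} {u w : V},
    IsWalk G K q u w → (q.map (stepStart G)).tail = (q.map (stepEnd G)).dropLast
  | [], _, _, _ => rfl
  | [s], _, _, _ => rfl
  | s :: s' :: t, u, w, h => by
    have h2 : IsWalk G K (s' :: t) (stepEnd G s) w := h.2.2
    have hstart : stepStart G s' = stepEnd G s := h2.2.1
    have ih := walk_tail_starts h2
    simp only [List.map_cons, List.tail_cons] at ih ⊢
    rw [List.dropLast_cons₂, ← ih, hstart]

lemma trim_walk_aux {K : Subgraph G} {v₀ u : V} (n : ℕ) : ∀ (q : List (E × Bool)),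
    q.length ≤ n → IsWalk G K q v₀ u → u ≠ v₀ →
    ∃ q', q' ≠ [] ∧ IsWalk G K q' v₀ u ∧ ∀ x ∈ q'.map (stepEnd G), x ≠ v₀ := by
  induction n with
  | zero =>
    intro q hlen hq hne
    rw [List.length_eq_zero_iff.1 (Nat.le_zero.1 hlen)] at hq
    exact absurd hq.1.symm hne
  | succ n ih =>
    intro q hlen hq hne
    by_cases h : ∀ x ∈ q.map (stepEnd G), x ≠ v₀
    · refine ⟨q, ?_, hq, h⟩
      rintro rfl
      exact hne hq.1.symm
    · push_neg at h
      obtain ⟨x, hx, hxeq⟩ := h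
      obtain ⟨s, hs, hse⟩ := List.mem_map.1 hx
      have hse' : stepEnd G s = v₀ := by rw [hse, hxeq]
      obtain ⟨a, b, heq⟩ := List.append_of_mem hs
      rw [heq] at hq hlen
      obtain ⟨y, hy⟩ := isWalk_append_right (L₁ := a) (L₂ := s :: b) hq
      have hb : IsWalk G K b v₀ u := by rw [← hse']; exact hy.2.2
      refine ih b ?_ hb hne
      rw [List.length_append, List.length_cons] at hlen
      omega

lemma trim_walk {K : Subgraph G} {v₀ u : V} (q : List (E × Bool))
    (hq : IsWalk G K q v₀ u) (hne : u ≠ v₀) :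
    ∃ q', q' ≠ [] ∧ IsWalk G K q' v₀ u ∧ ∀ x ∈ q'.map (stepEnd G), x ≠ v₀ :=
  trim_walk_aux q.length q le_rfl hq hne

end Trim

section WalkGroup

variable {V E Γ : Type} [DecidableEq V] [DecidableEq E] [Fintype V] [Fintype E] [CommGroup Γ]
variable {G : GainedGraph V E Γ}

/-- For a connected subgraph, every element of the gain group is the gain of some closed
walk based at any chosen vertex. -/
lemma exists_walk_of_mem_gainGroup {X : Subgraph G} (hconn : Connected G X) {u : V}
    (hu : u ∈ X.verts) {g : Γ} (hg : g ∈ gainGroup G X) :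
    ∃ L, IsWalk G X L u u ∧ walkGain G L = g := by
  let W : Subgroup Γ :=
    { carrier := {g | ∃ L, IsWalk G X L u u ∧ walkGain G L = g}
      one_mem' := ⟨[], ⟨rfl, hu⟩, rfl⟩
      mul_mem' := by
        rintro a b ⟨L1, h1, rfl⟩ ⟨L2, h2, rfl⟩
        exact ⟨L1 ++ L2, isWalk_append h1 h2, walkGain_append L1 L2⟩
      inv_mem' := by
        rintro a ⟨L, h, rfl⟩
        exact ⟨revWalk L, isWalk_revWalk h, walkGain_revWalk L⟩ }
  suffices hle : gainGroup G X ≤ W from hle hg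
  apply Subgroup.closure_le W |>.2
  rintro g ⟨u', L', hw, hfix, rfl⟩
  have hu' : u' ∈ X.verts := isWalk_start_mem hw
  obtain ⟨p, hp⟩ := hconn.2 u hu u' hu'
  refine ⟨p ++ (L' ++ revWalk p), isWalk_append hp (isWalk_append hw (isWalk_revWalk hp)), ?_⟩
  rw [walkGain_append, walkGain_append, walkGain_revWalk]
  rw [mul_comm (walkGain G L') ((walkGain G p)⁻¹), ← mul_assoc, mul_inv_cancel, one_mul]

lemma dropLast_reverse' {α : Type*} (l : List α) : l.reverse.dropLast = l.tail.reverse := by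
  have h2 := @List.tail_reverse _ l.reverse
  simp only [List.reverse_reverse] at h2
  rw [h2, List.reverse_reverse]

lemma revWalk_map_stepEnd (q : List (E × Bool)) :
    (revWalk q).map (stepEnd G) = (q.map (stepStart G)).reverse := by
  unfold revWalk
  rw [List.map_reverse, List.map_map]
  congr 1
  exact List.map_congr_left (fun s _ => stepEnd_flip s)

/-- In a connected near-balanced (at `v₀`) graph `K`, the gain group of any connected
subgraph avoiding `v₀` lies in `{1, δ, δ⁻¹}`. -/
lemma gainGroup_subset_of_avoid {K X : Subgraph G} (hXK : X ≤ K)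
    (hKconn : Connected G K) {v₀ : V} {δ : Γ} (hNB : NearBalancedAt G K v₀ δ)
    (hv₀K : v₀ ∈ K.verts) (hv₀X : v₀ ∉ X.verts) (hXconn : Connected G X) :
    ∀ g ∈ gainGroup G X, g ∈ ({1, δ, δ⁻¹} : Set Γ) := by
  intro g hg
  obtain ⟨u, hu⟩ := hXconn.1
  obtain ⟨L, hL, hgain⟩ := exists_walk_of_mem_gainGroup hXconn hu hg
  have huK : u ∈ K.verts := hXK.1 hu
  have hune : u ≠ v₀ := fun h => hv₀X (h ▸ hu)
  obtain ⟨q0, hq0⟩ := hKconn.2 v₀ hv₀K u huK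
  obtain ⟨q, hqne, hq, hqend⟩ := trim_walk q0 hq0 hune
  have hM : IsWalk G K (q ++ (L ++ revWalk q)) v₀ v₀ :=
    isWalk_append hq (isWalk_append (isWalk_mono hXK hL) (isWalk_revWalk hq))
  have hgM : walkGain G (q ++ (L ++ revWalk q)) = g := by
    rw [walkGain_append, walkGain_append, walkGain_revWalk, hgain]
    rw [mul_comm g ((walkGain G q)⁻¹), ← mul_assoc, mul_inv_cancel, one_mul]
  have hcond : ∀ x ∈ ((q ++ (L ++ revWalk q)).map (stepEnd G)).dropLast, x ≠ v₀ := by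
    have hrev : (revWalk q).map (stepEnd G) = (q.map (stepStart G)).reverse :=
      revWalk_map_stepEnd q
    have hrevne : (revWalk q).map (stepEnd G) ≠ [] := by
      rw [hrev]
      intro h
      exact hqne (by simpa using congrArg List.length h)
    have h1 : List.map (stepEnd G) L ++ List.map (stepEnd G) (revWalk q) ≠ [] :=
      fun h => hrevne (List.append_eq_nil_iff.1 h).2
    intro x hx
    rw [List.map_append, List.map_append,
      List.dropLast_append_of_ne_nil h1,
      List.dropLast_append_of_ne_nil hrevne] at hx
    rcases List.mem_append.1 hx with hx | hx
    · exact hqend x hx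
    rcases List.mem_append.1 hx with hx | hx
    · intro hxx
      exact hv₀X (hxx ▸ isWalk_ends_subset hL x hx)
    · have : ((revWalk q).map (stepEnd G)).dropLast = ((q.map (stepStart G)).tail).reverse := by
        rw [hrev, dropLast_reverse']
      rw [this, walk_tail_starts hq] at hx
      exact hqend x (List.dropLast_subset _ (List.mem_reverse.1 hx))
  have := hNB.2 _ hM hcond
  rwa [hgM] at this

end WalkGroup

section AlphaEval

variable {V E Γ : Type} [DecidableEq V] [DecidableEq E] [Fintype V] [Fintype E] [Group Γ]
variable {G : GainedGraph V E Γ} {k j : ℕ}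

lemma alpha_eq_balanced {X : Subgraph G} (h : Balanced G X) : alpha G k j X = 0 := by
  unfold alpha; rw [if_pos h]

lemma alpha_eq_br2 {X : Subgraph G} (h1 : ¬ Balanced G X) (h2 : Odd j ∧ IsZIso G X 2) :
    alpha G k j X = 1 := by
  unfold alpha; rw [if_neg h1, if_pos h2]

lemma alpha_eq_spm {X : Subgraph G} (h1 : ¬ Balanced G X) (h2 : ¬ (Odd j ∧ IsZIso G X 2))
    (h3 : IsSpm G k j X) : alpha G k j X = 2 - (X.fixedVerts.card : ℤ) := by
  unfold alpha; rw [if_neg h1, if_neg h2, if_pos h3]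

lemma alpha_eq_s0 {X : Subgraph G} (h1 : ¬ Balanced G X) (h2 : ¬ (Odd j ∧ IsZIso G X 2))
    (h3 : ¬ IsSpm G k j X)
    (h4 : IsS G k j 0 X ∨ (X.fixedVerts.card = 0 ∧ ProperNearBalanced G X)) :
    alpha G k j X = 2 - 2 * (X.fixedVerts.card : ℤ) := by
  unfold alpha; rw [if_neg h1, if_neg h2, if_neg h3, if_pos h4]

lemma alpha_eq_gen {X : Subgraph G} (h1 : ¬ Balanced G X) (h2 : ¬ (Odd j ∧ IsZIso G X 2))
    (h3 : ¬ IsSpm G k j X)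
    (h4 : ¬ (IsS G k j 0 X ∨ (X.fixedVerts.card = 0 ∧ ProperNearBalanced G X))) :
    alpha G k j X = 3 - 2 * (X.fixedVerts.card : ℤ) := by
  unfold alpha; rw [if_neg h1, if_neg h2, if_neg h3, if_neg h4]

lemma alpha_le_two {X : Subgraph G} (hc : X.fixedVerts.card ≤ 1)
    (h : Balanced G X ∨ (Odd j ∧ IsZIso G X 2) ∨ IsSpm G k j X ∨ IsS G k j 0 X ∨
      (X.fixedVerts.card = 0 ∧ ProperNearBalanced G X)) :
    alpha G k j X ≤ 2 := by
  unfold alpha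
  split_ifs with h1 h2 h3 h4
  · omega
  · omega
  · omega
  · omega
  · exfalso; tauto

end AlphaEval

section ZModFacts

lemma natCard_mult_zmod (n : ℕ) : Nat.card (Multiplicative (ZMod n)) = n := by
  rw [Nat.card_congr Multiplicative.toAdd, Nat.card_zmod]

lemma zmod_cast_transfer {m n : ℕ} (hmn : m ∣ n) {j : ℕ} {i : ℤ}
    (h : (j : ZMod n) = (i : ZMod n)) : (j : ZMod m) = (i : ZMod m) := by
  have := congrArg (ZMod.castHom hmn (ZMod m)) h
  rwa [map_natCast, map_intCast] at this

lemma sset_of_dvd {k j : ℕ} {i : ℤ} {n m : ℕ} (hn : n ∈ SSet k j i) (hmn : m ∣ n)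
    (h2 : 2 ≤ m) (hodd : Odd j → m ≠ 2) : m ∈ SSet k j i :=
  ⟨h2, hmn.trans hn.2.1, hodd, zmod_cast_transfer hmn hn.2.2.2⟩

end ZModFacts

section Crux

variable {V E : Type} [DecidableEq V] [DecidableEq E] [Fintype V] [Fintype E]
variable {k : ℕ} [NeZero k] {G : GainedGraph V E (Multiplicative (ZMod k))}

lemma isZIso_card_eq {H : Subgraph G} {n : ℕ} (h : IsZIso G H n) :
    Nat.card (gainGroup G H) = n := by
  obtain ⟨e⟩ := h
  rw [Nat.card_congr e.toEquiv, natCard_mult_zmod]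

lemma isZIso_natCard (H : Subgraph G) : IsZIso G H (Nat.card (gainGroup G H)) :=
  ⟨(zmodCyclicMulEquiv inferInstance).symm⟩

lemma card_gainGroup_dvd (H : Subgraph G) : Nat.card (gainGroup G H) ∣ k := by
  have := Subgroup.card_subgroup_dvd_card (gainGroup G H)
  rwa [natCard_mult_zmod] at this

lemma two_le_card_of_not_balanced {H : Subgraph G} (h : ¬ Balanced G H) :
    2 ≤ Nat.card (gainGroup G H) := by
  have h1 : Nat.card (gainGroup G H) ≠ 1 := fun hc => h (Subgroup.card_eq_one.1 hc)
  have h0 : 0 < Nat.card (gainGroup G H) := Nat.card_pos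
  omega

lemma crux {j : ℕ} {K X : Subgraph G} (hXK : X ≤ K) (hXconn : Connected G X)
    (hKconn : Connected G K) (hcX : X.fixedVerts.card ≤ 1) (hcK : K.fixedVerts.card ≤ 1) :
    alpha G k j X + 2 * (X.fixedVerts.card : ℤ) ≤
      alpha G k j K + 2 * (K.fixedVerts.card : ℤ) := by
  have hsub : X.fixedVerts ⊆ K.fixedVerts := fun x hx =>
    Finset.mem_inter.2 ⟨hXK.1 (Finset.mem_inter.1 hx).1, (Finset.mem_inter.1 hx).2⟩
  have hcle : X.fixedVerts.card ≤ K.fixedVerts.card := Finset.card_le_card hsub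
  by_cases hXbal : Balanced G X
  · have h0 : alpha G k j X = 0 := alpha_eq_balanced hXbal
    have h1 := alpha_nonneg (G := G) (k := k) (j := j) hcK
    omega
  have hKbal : ¬ Balanced G K := fun h => hXbal (balanced_mono hXK h)
  set m := Nat.card (gainGroup G X) with hm
  have hm2 : 2 ≤ m := two_le_card_of_not_balanced hXbal
  have hIX : IsZIso G X m := isZIso_natCard X
  have hmdvdK : m ∣ Nat.card (gainGroup G K) :=
    Subgroup.card_dvd_of_le (gainGroup_mono hXK)
  have hmk : m ∣ k := card_gainGroup_dvd X
  by_cases hK2 : Odd j ∧ IsZIso G K 2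
  · have hcK2 : Nat.card (gainGroup G K) = 2 := isZIso_card_eq hK2.2
    have hm2' : m = 2 := by
      have := Nat.le_of_dvd (by norm_num) (hcK2 ▸ hmdvdK)
      omega
    have hαX : alpha G k j X = 1 := alpha_eq_br2 hXbal ⟨hK2.1, hm2' ▸ hIX⟩
    have hαK : alpha G k j K = 1 := alpha_eq_br2 hKbal hK2
    omega
  by_cases hKspm : IsSpm G k j K
  · have hαK := alpha_eq_spm hKbal hK2 hKspm
    have hn : ∃ i : ℤ, (i = -1 ∨ i = 1) ∧ (Nat.card (gainGroup G K)) ∈ SSet k j i := by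
      rcases hKspm with ⟨n, hn, hiso⟩ | ⟨n, hn, hiso⟩
      · exact ⟨-1, Or.inl rfl, isZIso_card_eq hiso ▸ hn⟩
      · exact ⟨1, Or.inr rfl, isZIso_card_eq hiso ▸ hn⟩
    obtain ⟨i, hi, hnS⟩ := hn
    by_cases hbr2 : Odd j ∧ IsZIso G X 2
    · have hαX : alpha G k j X = 1 := alpha_eq_br2 hXbal hbr2
      omega
    · have hmodd : Odd j → m ≠ 2 := by
        intro hodd hm2''
        exact hbr2 ⟨hodd, hm2'' ▸ hIX⟩
      have hmS : m ∈ SSet k j i := sset_of_dvd hnS hmdvdK hm2 hmodd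
      have hXspm : IsSpm G k j X := by
        rcases hi with rfl | rfl
        · exact Or.inl ⟨m, hmS, hIX⟩
        · exact Or.inr ⟨m, hmS, hIX⟩
      have hαX : alpha G k j X ≤ 2 - (X.fixedVerts.card : ℤ) := by
        by_cases hbb : Odd j ∧ IsZIso G X 2
        · exact absurd hbb hbr2
        · rw [alpha_eq_spm hXbal hbb hXspm]
      omega
  by_cases hKS0 : IsS G k j 0 K ∨ (K.fixedVerts.card = 0 ∧ ProperNearBalanced G K)
  · have hαK := alpha_eq_s0 hKbal hK2 hKspm hKS0
    rcases hKS0 with hS0 | ⟨hc0, hpnb⟩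
    · obtain ⟨n, hnS, hiso⟩ := hS0
      have hneq : n = Nat.card (gainGroup G K) := (isZIso_card_eq hiso).symm
      rw [hneq] at hnS
      have hj0 : (j : ZMod m) = ((0 : ℤ) : ZMod m) := zmod_cast_transfer hmdvdK hnS.2.2.2
      haveI : Fact (1 < m) := ⟨hm2⟩
      have hmodd : Odd j → m ≠ 2 := by
        intro hodd hm2''
        rw [hm2''] at hj0
        rw [Int.cast_zero] at hj0
        have : (2 : ℕ) ∣ j := (ZMod.natCast_eq_zero_iff j 2).1 hj0
        exact (Nat.not_even_iff_odd.2 hodd) (even_iff_two_dvd.2 this)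
      have hbr2X : ¬ (Odd j ∧ IsZIso G X 2) := by
        rintro ⟨hodd, hiso2⟩
        exact hmodd hodd (hm.trans (isZIso_card_eq hiso2))
      have hspmX : ¬ IsSpm G k j X := by
        have key : ∀ i' : ℤ, (i' = -1 ∨ i' = 1) → ¬ IsS G k j i' X := by
          rintro i' hi' ⟨n', hn', hiso'⟩
          have : n' = m := (isZIso_card_eq hiso').symm ▸ rfl
          rw [this] at hn'
          have hj1 : (j : ZMod m) = ((i' : ℤ) : ZMod m) := hn'.2.2.2
          rw [hj0, Int.cast_zero] at hj1
          rcases hi' with rfl | rfl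
          · rw [Int.cast_neg, Int.cast_one] at hj1
            exact one_ne_zero (neg_eq_zero.1 hj1.symm)
          · rw [Int.cast_one] at hj1
            exact one_ne_zero hj1.symm
        rintro (h | h)
        · exact key (-1) (Or.inl rfl) h
        · exact key 1 (Or.inr rfl) h
      have hmS0 : m ∈ SSet k j 0 := sset_of_dvd hnS hmdvdK hm2 hmodd
      have hαX := alpha_eq_s0 hXbal hbr2X hspmX (Or.inl ⟨m, hmS0, hIX⟩)
      omega
    · have hcX0 : X.fixedVerts.card = 0 := by omega
      suffices h : alpha G k j X ≤ 2 by
        rw [hαK, hc0, hcX0]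
        simpa using h
      obtain ⟨⟨hNoFix, v₀, hv₀, δ, hNBat⟩, hni2, hni3⟩ := hpnb
      have hm23 : (m = 2 ∨ m = 3) → alpha G k j X ≤ 2 := by
        intro hmm
        apply alpha_le_two hcX
        rcases hmm with h2 | h3
        · rcases Nat.even_or_odd j with hje | hjo
          · right; right; right; left
            refine ⟨2, ⟨le_refl 2, h2 ▸ hmk,
              fun hodd => absurd hje (Nat.not_even_iff_odd.2 hodd), ?_⟩, h2 ▸ hIX⟩
            rw [Int.cast_zero]
            exact (ZMod.natCast_eq_zero_iff j 2).2 (even_iff_two_dvd.1 hje)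
          · right; left; exact ⟨hjo, h2 ▸ hIX⟩
        · have hall : ∀ x : ZMod 3, x = ((0 : ℤ) : ZMod 3) ∨ x = ((1 : ℤ) : ZMod 3) ∨
              x = ((-1 : ℤ) : ZMod 3) := by decide
          rcases hall (j : ZMod 3) with h0 | h1 | hm1
          · right; right; right; left
            exact ⟨3, ⟨by norm_num, h3 ▸ hmk, fun _ => by norm_num, h0⟩, h3 ▸ hIX⟩
          · right; right; left
            exact Or.inr ⟨3, ⟨by norm_num, h3 ▸ hmk, fun _ => by norm_num, h1⟩, h3 ▸ hIX⟩
          · right; right; left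
            exact Or.inl ⟨3, ⟨by norm_num, h3 ▸ hmk, fun _ => by norm_num, hm1⟩, h3 ▸ hIX⟩
      by_cases hv₀X : v₀ ∈ X.verts
      · by_cases hX2 : IsZIso G X 2
        · exact hm23 (Or.inl (hm.trans (isZIso_card_eq hX2)))
        by_cases hX3 : IsZIso G X 3
        · exact hm23 (Or.inr (hm.trans (isZIso_card_eq hX3)))
        · apply alpha_le_two hcX
          right; right; right; right
          refine ⟨hcX0, ⟨⟨fun x hx => hNoFix x (hXK.1 hx), v₀, hv₀X, δ, hXbal, ?_⟩, hX2, hX3⟩⟩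
          intro L hw hcond
          exact hNBat.2 L (isWalk_mono hXK hw) hcond
      · have hsub3 : ∀ g ∈ gainGroup G X, g ∈ ({1, δ, δ⁻¹} : Set (Multiplicative (ZMod k))) :=
          gainGroup_subset_of_avoid hXK hKconn hNBat hv₀ hv₀X hXconn
        have hcard3 : m ≤ 3 := by
          have e1 : m = ((gainGroup G X : Set (Multiplicative (ZMod k)))).ncard := by
            rw [hm, ← Nat.card_coe_set_eq]
            rfl
          have e2 : ((gainGroup G X : Set (Multiplicative (ZMod k)))).ncard ≤
              ({1, δ, δ⁻¹} : Set (Multiplicative (ZMod k))).ncard :=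
            Set.ncard_le_ncard hsub3 (Set.toFinite _)
          have e3 : ({1, δ, δ⁻¹} : Set (Multiplicative (ZMod k))).ncard ≤ 3 := by
            calc ({1, δ, δ⁻¹} : Set (Multiplicative (ZMod k))).ncard
                ≤ ({δ, δ⁻¹} : Set (Multiplicative (ZMod k))).ncard + 1 :=
                  Set.ncard_insert_le _ _
              _ ≤ (({δ⁻¹} : Set (Multiplicative (ZMod k))).ncard + 1) + 1 := by
                  exact Nat.add_le_add_right (Set.ncard_insert_le _ _) 1
              _ ≤ 3 := by simp [Set.ncard_singleton]
          omega
        exact hm23 (by omega)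
  · have hαK := alpha_eq_gen hKbal hK2 hKspm hKS0
    have h1 := alpha_le (G := G) (k := k) (j := j) hcX
    omega

end Crux

section Support

variable {V E Γ : Type} [DecidableEq V] [DecidableEq E] [Fintype V] [Fintype E] [Group Γ]
variable {G : GainedGraph V E Γ}

lemma edgeSpan_verts_subset {F : Finset E} {K : Subgraph G} (hFK : F ⊆ K.edges) :
    (edgeSpan G F).verts ⊆ K.verts := by
  intro x hx
  obtain ⟨f, hf, hfx⟩ := mem_edgeSpan_verts.1 hx
  rcases hfx with rfl | rfl
  · exact K.tail_mem f (hFK hf)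
  · exact K.head_mem f (hFK hf)

lemma component_le_of_subset {F : Finset E} {K : Subgraph G} (hFK : F ⊆ K.edges)
    {X : Subgraph G} (hX : X ∈ components G F) : X ≤ K :=
  ⟨fun x hx => edgeSpan_verts_subset hFK (components_verts_subset hX hx),
    fun f hf => hFK (components_edges_subset hX hf)⟩

/-- In a connected subgraph with at least one edge, every vertex is an endpoint of
some edge. -/
lemma vertex_endpoint_of_connected {K : Subgraph G} (hconn : Connected G K)
    (hne : K.edges.Nonempty) {x : V} (hx : x ∈ K.verts) :
    ∃ e ∈ K.edges, G.tail e = x ∨ G.head e = x := by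
  by_contra hno
  push_neg at hno
  obtain ⟨e₀, he₀⟩ := hne
  have hy : G.tail e₀ ∈ K.verts := K.tail_mem e₀ he₀
  obtain ⟨L, hL⟩ := hconn.2 x hx (G.tail e₀) hy
  cases L with
  | nil =>
    obtain ⟨rfl, -⟩ := hL
    exact (hno e₀ he₀).1 rfl
  | cons s L' =>
    have hs : s.1 ∈ K.edges := hL.1
    have hstart : stepStart G s = x := hL.2.1
    have := hno s.1 hs
    rcases s with ⟨f, b⟩
    cases b
    · exact this.2 hstart
    · exact this.1 hstart

end Support

section CruxCount

variable {V E : Type} [DecidableEq V] [DecidableEq E] [Fintype V] [Fintype E]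
variable {k : ℕ} [NeZero k] {G : GainedGraph V E (Multiplicative (ZMod k))}

lemma fCount_le_crux {j : ℕ} {F : Finset E} (hne : F.Nonempty) {K : Subgraph G}
    (hKconn : Connected G K) (hcK : K.fixedVerts.card ≤ 1) (hFK : F ⊆ K.edges) :
    fCount G k j F + (3 - alpha G k j K - 2 * (K.fixedVerts.card : ℤ)) ≤
      2 * ((edgeSpan G F).verts.card : ℤ) - 2 * ((edgeSpan G F).fixedVerts.card : ℤ) := by
  have hcomp : ∀ X ∈ components G F, X ≤ K := fun X hX => component_le_of_subset hFK hX
  have hcX : ∀ X ∈ components G F, X.fixedVerts.card ≤ 1 := by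
    intro X hX
    refine le_trans (Finset.card_le_card ?_) hcK
    intro x hx
    exact Finset.mem_inter.2 ⟨(hcomp X hX).1 (Finset.mem_inter.1 hx).1,
      (Finset.mem_inter.1 hx).2⟩
  have hconnX : ∀ X ∈ components G F, Connected G X := by
    intro X hX
    obtain ⟨e, he, rfl⟩ := components_mem hX
    exact componentOf_connected he
  -- rewrite fCount
  have hsplit : fCount G k j F =
      (2 * ((edgeSpan G F).verts.card : ℤ) - 2 * ((edgeSpan G F).fixedVerts.card : ℤ))
        - ∑ X ∈ components G F, (3 - alpha G k j X - 2 * (X.fixedVerts.card : ℤ)) := by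
    unfold fCount
    have e1 : ((edgeSpan G F).verts.card : ℤ) =
        ∑ X ∈ components G F, (X.verts.card : ℤ) := by
      rw [← Nat.cast_sum, sum_components_verts_card]
    have e2 : ((edgeSpan G F).fixedVerts.card : ℤ) =
        ∑ X ∈ components G F, (X.fixedVerts.card : ℤ) := by
      rw [← Nat.cast_sum, sum_components_fixed_card]
    rw [e1, e2, Finset.mul_sum, Finset.mul_sum, ← Finset.sum_sub_distrib,
      ← Finset.sum_sub_distrib]
    apply Finset.sum_congr rfl
    intro X hX
    ring
  obtain ⟨e₀, he₀⟩ := hne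
  have hX₀ : componentOf G F e₀ ∈ components G F := componentOf_mem_components he₀
  have hterm : 3 - alpha G k j K - 2 * (K.fixedVerts.card : ℤ) ≤
      ∑ X ∈ components G F, (3 - alpha G k j X - 2 * (X.fixedVerts.card : ℤ)) := by
    have h1 : 3 - alpha G k j K - 2 * (K.fixedVerts.card : ℤ) ≤
        3 - alpha G k j (componentOf G F e₀)
          - 2 * ((componentOf G F e₀).fixedVerts.card : ℤ) := by
      have := crux (j := j) (hcomp _ hX₀) (hconnX _ hX₀) hKconn (hcX _ hX₀) hcK
      omega
    refine le_trans h1 (Finset.single_le_sum (f := fun X => 3 - alpha G k j X - 2 * (X.fixedVerts.card : ℤ)) ?_ hX₀)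
    intro X hX
    have := alpha_le (G := G) (k := k) (j := j) (hcX X hX)
    show (0:ℤ) ≤ 3 - alpha G k j X - 2 * (X.fixedVerts.card : ℤ)
    omega
  omega

end CruxCount

section StepHelpers

variable {V E Γ : Type} [DecidableEq V] [DecidableEq E] [Fintype V] [Fintype E] [Group Γ]
variable {G : GainedGraph V E Γ}

lemma stepStart_endpoint (s : E × Bool) :
    G.tail s.1 = stepStart G s ∨ G.head s.1 = stepStart G s := by
  rcases s with ⟨e, b⟩; cases b
  · exact Or.inr rfl
  · exact Or.inl rfl

lemma stepEnd_endpoint (s : E × Bool) :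
    G.tail s.1 = stepEnd G s ∨ G.head s.1 = stepEnd G s := by
  rcases s with ⟨e, b⟩; cases b
  · exact Or.inl rfl
  · exact Or.inr rfl

variable {G₀ : Subgraph G} {v : V}

lemma step_eq_of_ends (hloop : ¬ HasLoopAt G G₀ v) {s t : E × Bool} (hsE : s.1 ∈ G₀.edges)
    (hst : t.1 = s.1) (hs : stepEnd G s = v) (ht : stepEnd G t = v) : t = s := by
  rcases s with ⟨e, b⟩; rcases t with ⟨e', c⟩
  obtain rfl : e' = e := hst
  cases b <;> cases c
  · rfl
  · exact absurd ⟨_, hsE, hs, ht⟩ hloop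
  · exact absurd ⟨_, hsE, ht, hs⟩ hloop
  · rfl

lemma step_eq_of_starts (hloop : ¬ HasLoopAt G G₀ v) {s t : E × Bool} (hsE : s.1 ∈ G₀.edges)
    (hst : t.1 = s.1) (hs : stepStart G s = v) (ht : stepStart G t = v) : t = s := by
  rcases s with ⟨e, b⟩; rcases t with ⟨e', c⟩
  obtain rfl : e' = e := hst
  cases b <;> cases c
  · rfl
  · exact absurd ⟨_, hsE, ht, hs⟩ hloop
  · exact absurd ⟨_, hsE, hs, ht⟩ hloop
  · rfl

lemma step_flip_of_end_start (hloop : ¬ HasLoopAt G G₀ v) {s t : E × Bool}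
    (hsE : s.1 ∈ G₀.edges) (hst : s.1 = t.1) (hs : stepEnd G s = v)
    (ht : stepStart G t = v) : s = flipStep t := by
  rcases s with ⟨e, b⟩; rcases t with ⟨e', c⟩
  obtain rfl : e = e' := hst
  cases b <;> cases c
  · exact absurd ⟨_, hsE, hs, ht⟩ hloop
  · rfl
  · rfl
  · exact absurd ⟨_, hsE, ht, hs⟩ hloop

lemma flipStep_flipStep (s : E × Bool) : flipStep (flipStep s) = s := by
  rcases s with ⟨e, b⟩; cases b <;> rfl

end StepHelpers

section MainAux

lemma main_aux
    {V E : Type} [DecidableEq V] [DecidableEq E] [Fintype V] [Fintype E]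
    (k j : ℕ) (hk : 4 ≤ k)
    (G : GainedGraph V E (Multiplicative (ZMod k)))
    (G₀ : Subgraph G) (hG₀ : IsGainGraphOn G G₀)
    (htight : GainTightKJ G k j G₀)
    (v : V)
    (hdeg : degree G G₀ v = 3) (hloop : ¬ HasLoopAt G G₀ v)
    (f₁ f₂ : E) (hf₁ : IsOneReduction G G₀ v f₁) (hf₂ : IsOneReduction G G₀ v f₂)
    (hdiff : ¬ SameEdge G f₁ f₂)
    (H₁ H₂ : Subgraph G)
    (hb₁ : IsBlocker G k j G₀ v f₁ H₁) (hb₂ : IsBlocker G k j G₀ v f₂ H₂)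
    (hE : ((H₁.inter H₂).edges).Nonempty) :
    alpha G k j (H₁.addEdge f₁) ≠ 3 - 2 * (H₁.fixedVerts.card : ℤ) := by
  intro hα₁
  haveI : NeZero k := ⟨by omega⟩
  obtain ⟨hH₁G, hv₁, ht₁, hh₁, hE₁ne, hconn₁, hcount₁⟩ := hb₁
  obtain ⟨hH₂G, hv₂, ht₂, hh₂, hE₂ne, hconn₂, hcount₂⟩ := hb₂
  obtain ⟨hf₁nm, hf₁t, hf₁h, s₁, s₂, hs₁E, hs₂E, hs₁₂, hs₁end, hs₂start, hft₁, hfh₁, hfg₁⟩ := hf₁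
  obtain ⟨hf₂nm, hf₂t, hf₂h, t₁, t₂, ht₁E, ht₂E, ht₁₂, ht₁end, ht₂start, hft₂, hfh₂, hfg₂⟩ := hf₂
  -- verts of addEdge
  have hK₁v : (H₁.addEdge f₁).verts = H₁.verts := by
    show insert (G.tail f₁) (insert (G.head f₁) H₁.verts) = H₁.verts
    rw [Finset.insert_eq_self.2 hh₁, Finset.insert_eq_self.2 ht₁]
  have hK₂v : (H₂.addEdge f₂).verts = H₂.verts := by
    show insert (G.tail f₂) (insert (G.head f₂) H₂.verts) = H₂.verts
    rw [Finset.insert_eq_self.2 hh₂, Finset.insert_eq_self.2 ht₂]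
  have hK₂c : (H₂.addEdge f₂).fixedVerts = H₂.fixedVerts := by
    unfold Subgraph.fixedVerts
    rw [hK₂v]
  -- edge counts
  have he₁ : (H₁.edges.card : ℤ) =
      2 * (H₁.verts.card : ℤ) - 2 * (H₁.fixedVerts.card : ℤ) := by
    rw [hcount₁, hα₁]; ring
  have he₂ : (H₂.edges.card : ℤ) =
      2 * (H₂.verts.card : ℤ) - 3 + alpha G k j (H₂.addEdge f₂) := hcount₂
  -- fixed card facts
  have hcG₀ : G₀.fixedVerts.card ≤ 1 := hG₀.fixed_card
  have hfixsub : ∀ {H : Subgraph G}, H ≤ G₀ → H.fixedVerts ⊆ G₀.fixedVerts := by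
    intro H hH x hx
    exact Finset.mem_inter.2 ⟨hH.1 (Finset.mem_inter.1 hx).1, (Finset.mem_inter.1 hx).2⟩
  have hc₁le : H₁.fixedVerts.card ≤ 1 :=
    le_trans (Finset.card_le_card (hfixsub hH₁G)) hcG₀
  have hc₂le : H₂.fixedVerts.card ≤ 1 :=
    le_trans (Finset.card_le_card (hfixsub hH₂G)) hcG₀
  -- the edge set at v
  set A := G₀.edges.filter (fun e => G.tail e = v ∨ G.head e = v) with hA
  have hnoloop : ∀ e ∈ G₀.edges, ¬(G.tail e = v ∧ G.head e = v) :=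
    fun e he hl => hloop ⟨e, he, hl⟩
  have hAcard : A.card = 3 := by
    rw [hA, Finset.filter_or, Finset.card_union_of_disjoint]
    · exact hdeg
    · rw [Finset.disjoint_left]
      intro e he1 he2
      exact hnoloop e (Finset.mem_filter.1 he1).1
        ⟨(Finset.mem_filter.1 he1).2, (Finset.mem_filter.1 he2).2⟩
  have hstepA : ∀ s : E × Bool, s.1 ∈ G₀.edges →
      (stepEnd G s = v ∨ stepStart G s = v) → s.1 ∈ A := by
    rintro ⟨e, b⟩ hs hv'
    refine Finset.mem_filter.2 ⟨hs, ?_⟩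
    cases b
    · rcases hv' with h | h
      · exact Or.inl h
      · exact Or.inr h
    · rcases hv' with h | h
      · exact Or.inr h
      · exact Or.inl h
  have hs₁A : s₁.1 ∈ A := hstepA s₁ hs₁E (Or.inl hs₁end)
  have hs₂A : s₂.1 ∈ A := hstepA s₂ hs₂E (Or.inr hs₂start)
  have ht₁A : t₁.1 ∈ A := hstepA t₁ ht₁E (Or.inl ht₁end)
  have ht₂A : t₂.1 ∈ A := hstepA t₂ ht₂E (Or.inr ht₂start)
  -- the two pairs are different
  have hpairs : ({s₁.1, s₂.1} : Finset E) ≠ ({t₁.1, t₂.1} : Finset E) := by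
    intro hPeq
    apply hdiff
    have ht₁mem : t₁.1 ∈ ({s₁.1, s₂.1} : Finset E) := by rw [hPeq]; simp
    have ht₂mem : t₂.1 ∈ ({s₁.1, s₂.1} : Finset E) := by rw [hPeq]; simp
    simp only [Finset.mem_insert, Finset.mem_singleton] at ht₁mem ht₂mem
    rcases ht₁mem with h11 | h12
    · have e1 : t₁ = s₁ := step_eq_of_ends hloop hs₁E h11 hs₁end ht₁end
      have h22 : t₂.1 = s₂.1 := by
        rcases ht₂mem with h | h
        · exact absurd (h.trans h11.symm).symm ht₁₂
        · exact h
      have e2 : t₂ = s₂ := step_eq_of_starts hloop hs₂E h22 hs₂start ht₂start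
      left
      refine ⟨?_, ?_, ?_⟩
      · rw [hft₁, hft₂, e1]
      · rw [hfh₁, hfh₂, e2]
      · rw [hfg₁, hfg₂, e1, e2]
    · have e1 : t₁ = flipStep s₂ := step_flip_of_end_start hloop ht₁E h12 ht₁end hs₂start
      have h21 : t₂.1 = s₁.1 := by
        rcases ht₂mem with h | h
        · exact h
        · exact absurd (h.trans h12.symm).symm ht₁₂
      have e2' : s₁ = flipStep t₂ := step_flip_of_end_start hloop hs₁E h21.symm hs₁end ht₂start
      have e2 : t₂ = flipStep s₁ := by rw [e2', flipStep_flipStep]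
      right
      refine ⟨?_, ?_, ?_⟩
      · rw [hft₁, hfh₂, e2, stepEnd_flip]
      · rw [hfh₁, hft₂, e1, stepStart_flip]
      · rw [hfg₁, hfg₂, e1, e2, stepGain_flip, stepGain_flip, mul_inv_rev, inv_inv, inv_inv]
  -- A is covered by the two pairs
  have hA_cover : ∀ a ∈ A, a = s₁.1 ∨ a = s₂.1 ∨ a = t₁.1 ∨ a = t₂.1 := by
    by_contra hcon
    push_neg at hcon
    obtain ⟨a, haA, ha1, ha2, ha3, ha4⟩ := hcon
    apply hpairs
    have hsubP1 : ({s₁.1, s₂.1} : Finset E) ⊆ A.erase a := by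
      intro x hx
      simp only [Finset.mem_insert, Finset.mem_singleton] at hx
      rcases hx with rfl | rfl
      · exact Finset.mem_erase.2 ⟨fun h => ha1 h.symm, hs₁A⟩
      · exact Finset.mem_erase.2 ⟨fun h => ha2 h.symm, hs₂A⟩
    have hsubP2 : ({t₁.1, t₂.1} : Finset E) ⊆ A.erase a := by
      intro x hx
      simp only [Finset.mem_insert, Finset.mem_singleton] at hx
      rcases hx with rfl | rfl
      · exact Finset.mem_erase.2 ⟨fun h => ha3 h.symm, ht₁A⟩
      · exact Finset.mem_erase.2 ⟨fun h => ha4 h.symm, ht₂A⟩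
    have hcardE : (A.erase a).card = 2 := by
      rw [Finset.card_erase_of_mem haA, hAcard]
    have h1 : ({s₁.1, s₂.1} : Finset E) = A.erase a :=
      Finset.eq_of_subset_of_card_le hsubP1 (by rw [hcardE, Finset.card_pair hs₁₂])
    have h2 : ({t₁.1, t₂.1} : Finset E) = A.erase a :=
      Finset.eq_of_subset_of_card_le hsubP2 (by rw [hcardE, Finset.card_pair ht₁₂])
    rw [h1, h2]
  -- the big edge set
  set F := (H₁.edges ∪ H₂.edges) ∪ A with hF
  have hFG₀ : F ⊆ G₀.edges := by
    intro e he
    rcases Finset.mem_union.1 he with h | h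
    · rcases Finset.mem_union.1 h with h | h
      · exact hH₁G.2 h
      · exact hH₂G.2 h
    · exact (Finset.mem_filter.1 h).1
  -- endpoints of A edges
  have hkeyS : ∀ s : E × Bool, stepStart G s ∈ insert v (H₁.verts ∪ H₂.verts) →
      stepEnd G s ∈ insert v (H₁.verts ∪ H₂.verts) →
      G.tail s.1 ∈ insert v (H₁.verts ∪ H₂.verts) ∧
        G.head s.1 ∈ insert v (H₁.verts ∪ H₂.verts) := by
    rintro ⟨e, b⟩ h1 h2
    cases b
    · exact ⟨h2, h1⟩
    · exact ⟨h1, h2⟩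
  have hvmem : v ∈ insert v (H₁.verts ∪ H₂.verts) := Finset.mem_insert_self _ _
  have hAend : ∀ a ∈ A, G.tail a ∈ insert v (H₁.verts ∪ H₂.verts) ∧
      G.head a ∈ insert v (H₁.verts ∪ H₂.verts) := by
    intro a ha
    rcases hA_cover a ha with rfl | rfl | rfl | rfl
    · refine hkeyS s₁ ?_ (hs₁end ▸ hvmem)
      rw [← hft₁]
      exact Finset.mem_insert_of_mem (Finset.mem_union_left _ ht₁)
    · refine hkeyS s₂ (hs₂start ▸ hvmem) ?_
      rw [← hfh₁]
      exact Finset.mem_insert_of_mem (Finset.mem_union_left _ hh₁)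
    · refine hkeyS t₁ ?_ (ht₁end ▸ hvmem)
      rw [← hft₂]
      exact Finset.mem_insert_of_mem (Finset.mem_union_right _ ht₂)
    · refine hkeyS t₂ (ht₂start ▸ hvmem) ?_
      rw [← hfh₂]
      exact Finset.mem_insert_of_mem (Finset.mem_union_right _ hh₂)
  have hspanS : (edgeSpan G F).verts ⊆ insert v (H₁.verts ∪ H₂.verts) := by
    intro x hx
    obtain ⟨f, hf, hfx⟩ := mem_edgeSpan_verts.1 hx
    rcases Finset.mem_union.1 hf with hf' | hfA
    · rcases Finset.mem_union.1 hf' with h1 | h2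
      · rcases hfx with rfl | rfl
        · exact Finset.mem_insert_of_mem (Finset.mem_union_left _ (H₁.tail_mem f h1))
        · exact Finset.mem_insert_of_mem (Finset.mem_union_left _ (H₁.head_mem f h1))
      · rcases hfx with rfl | rfl
        · exact Finset.mem_insert_of_mem (Finset.mem_union_right _ (H₂.tail_mem f h2))
        · exact Finset.mem_insert_of_mem (Finset.mem_union_right _ (H₂.head_mem f h2))
    · rcases hfx with rfl | rfl
      · exact (hAend f hfA).1
      · exact (hAend f hfA).2
  -- A is disjoint from the blockers' edges
  have hAdisj : Disjoint (H₁.edges ∪ H₂.edges) A := by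
    rw [Finset.disjoint_right]
    intro a haA haU
    have hav : G.tail a = v ∨ G.head a = v := (Finset.mem_filter.1 haA).2
    rcases Finset.mem_union.1 haU with h | h
    · rcases hav with hv' | hv'
      · exact hv₁ (hv' ▸ H₁.tail_mem a h)
      · exact hv₁ (hv' ▸ H₁.head_mem a h)
    · rcases hav with hv' | hv'
      · exact hv₂ (hv' ▸ H₂.tail_mem a h)
      · exact hv₂ (hv' ▸ H₂.head_mem a h)
  have hFcard : F.card + (H₁.edges ∩ H₂.edges).card =
      H₁.edges.card + H₂.edges.card + 3 := by
    have h1 : F.card = (H₁.edges ∪ H₂.edges).card + A.card :=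
      Finset.card_union_of_disjoint hAdisj
    have h2 := Finset.card_union_add_card_inter H₁.edges H₂.edges
    omega
  -- sparsity on F
  have hFne : F.Nonempty := ⟨s₁.1, Finset.mem_union_right _ hs₁A⟩
  have hSFle : edgeSpan G F ≤ G₀ := ⟨edgeSpan_verts_subset hFG₀, hFG₀⟩
  have hsparseF : (F.card : ℤ) ≤ fCount G k j F := htight.1 (edgeSpan G F) hSFle hFne
  have hcomps1 : ∀ X ∈ components G F, X.fixedVerts.card ≤ 1 := by
    intro X hX
    refine le_trans (Finset.card_le_card (hfixsub (component_le_of_subset hFG₀ hX))) hcG₀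
  have hcount1 := fCount_le_of_card_le (G := G) (F := F) k j hcomps1
  have hvU : v ∉ H₁.verts ∪ H₂.verts := by
    rw [Finset.mem_union]
    rintro (h | h)
    · exact hv₁ h
    · exact hv₂ h
  have hScard : (edgeSpan G F).verts.card ≤ (H₁.verts ∪ H₂.verts).card + 1 := by
    have h := Finset.card_le_card hspanS
    rwa [Finset.card_insert_of_notMem hvU] at h
  have hVunion : (H₁.verts ∪ H₂.verts).card + (H₁.verts ∩ H₂.verts).card =
      H₁.verts.card + H₂.verts.card := Finset.card_union_add_card_inter _ _
  -- fixed vertices lie in the span of F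
  have hfixspan : ∀ (H : Subgraph G) (f : E), Connected G (H.addEdge f) →
      H.edges.Nonempty → H.edges ⊆ F → (H.addEdge f).verts = H.verts →
      G.tail f ∈ (edgeSpan G F).verts → G.head f ∈ (edgeSpan G F).verts →
      H.fixedVerts ⊆ (edgeSpan G F).fixedVerts := by
    intro H f hconn hne hHF hKv htf hhf x hx
    have hxv : x ∈ H.verts := (Finset.mem_inter.1 hx).1
    have hxK : x ∈ (H.addEdge f).verts := hKv ▸ hxv
    have hKene : (H.addEdge f).edges.Nonempty := ⟨f, Finset.mem_insert_self _ _⟩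
    obtain ⟨e, he, hex⟩ := vertex_endpoint_of_connected hconn hKene hxK
    have hxspan : x ∈ (edgeSpan G F).verts := by
      rcases Finset.mem_insert.1 he with rfl | heH
      · rcases hex with rfl | rfl
        · exact htf
        · exact hhf
      · exact mem_edgeSpan_verts.2 ⟨e, hHF heH, hex⟩
    exact Finset.mem_inter.2 ⟨hxspan, (Finset.mem_inter.1 hx).2⟩
  have hfend : ∀ (s : E × Bool), s.1 ∈ A → stepStart G s ∈ (edgeSpan G F).verts ∧
      stepEnd G s ∈ (edgeSpan G F).verts := by
    intro s hsA
    have hsF : s.1 ∈ F := Finset.mem_union_right _ hsA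
    constructor
    · exact mem_edgeSpan_verts.2 ⟨s.1, hsF, stepStart_endpoint s⟩
    · exact mem_edgeSpan_verts.2 ⟨s.1, hsF, stepEnd_endpoint s⟩
  have hfix₁ : H₁.fixedVerts ⊆ (edgeSpan G F).fixedVerts := by
    refine hfixspan H₁ f₁ hconn₁ hE₁ne
      (fun e he => Finset.mem_union_left _ (Finset.mem_union_left _ he)) hK₁v ?_ ?_
    · rw [hft₁]; exact (hfend s₁ hs₁A).1
    · rw [hfh₁]; exact (hfend s₂ hs₂A).2
  have hfix₂ : H₂.fixedVerts ⊆ (edgeSpan G F).fixedVerts := by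
    refine hfixspan H₂ f₂ hconn₂ hE₂ne
      (fun e he => Finset.mem_union_left _ (Finset.mem_union_right _ he)) hK₂v ?_ ?_
    · rw [hft₂]; exact (hfend t₁ ht₁A).1
    · rw [hfh₂]; exact (hfend t₂ ht₂A).2
  -- intersection side
  set Ei := H₁.edges ∩ H₂.edges with hEi
  have hEine : Ei.Nonempty := hE
  have hIle : H₁.inter H₂ ≤ G₀ :=
    ⟨fun x hx => hH₁G.1 (Finset.mem_inter.1 hx).1,
      fun e he => hH₁G.2 (Finset.mem_inter.1 he).1⟩
  have hsparseI : (Ei.card : ℤ) ≤ fCount G k j Ei := htight.1 (H₁.inter H₂) hIle hE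
  have hcK₂le : (H₂.addEdge f₂).fixedVerts.card ≤ 1 := by rw [hK₂c]; exact hc₂le
  have hEiK₂ : Ei ⊆ (H₂.addEdge f₂).edges :=
    fun e he => Finset.mem_insert_of_mem (Finset.mem_inter.1 he).2
  have hcrux := fCount_le_crux (j := j) hEine hconn₂ hcK₂le hEiK₂
  rw [hK₂c] at hcrux
  have hspanIsub : (edgeSpan G Ei).verts ⊆ H₁.verts ∩ H₂.verts := by
    intro x hx
    obtain ⟨f, hf, hfx⟩ := mem_edgeSpan_verts.1 hx
    have hf1 : f ∈ H₁.edges := (Finset.mem_inter.1 hf).1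
    have hf2 : f ∈ H₂.edges := (Finset.mem_inter.1 hf).2
    rcases hfx with rfl | rfl
    · exact Finset.mem_inter.2 ⟨H₁.tail_mem f hf1, H₂.tail_mem f hf2⟩
    · exact Finset.mem_inter.2 ⟨H₁.head_mem f hf1, H₂.head_mem f hf2⟩
  have hspIcard : (edgeSpan G Ei).verts.card ≤ (H₁.verts ∩ H₂.verts).card :=
    Finset.card_le_card hspanIsub
  -- the fixed-vertex claim
  have hclaim : H₁.fixedVerts.card + H₂.fixedVerts.card + (edgeSpan G Ei).verts.card ≤
      (H₁.verts ∩ H₂.verts).card + (edgeSpan G Ei).fixedVerts.card +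
        (edgeSpan G F).fixedVerts.card := by
    by_cases h1 : H₁.fixedVerts.card = 0
    · by_cases h2 : H₂.fixedVerts.card = 0
      · omega
      · have : 1 ≤ (edgeSpan G F).fixedVerts.card := by
          have h2' : H₂.fixedVerts.Nonempty := Finset.card_pos.1 (by omega)
          obtain ⟨w, hw⟩ := h2'
          exact Finset.card_pos.2 ⟨w, hfix₂ hw⟩
        omega
    · by_cases h2 : H₂.fixedVerts.card = 0
      · have : 1 ≤ (edgeSpan G F).fixedVerts.card := by
          have h1' : H₁.fixedVerts.Nonempty := Finset.card_pos.1 (by omega)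
          obtain ⟨w, hw⟩ := h1'
          exact Finset.card_pos.2 ⟨w, hfix₁ hw⟩
        omega
      · have hc₁1 : H₁.fixedVerts.card = 1 := by omega
        have hc₂1 : H₂.fixedVerts.card = 1 := by omega
        obtain ⟨w, hw⟩ := Finset.card_eq_one.1 hc₁1
        obtain ⟨w', hw'⟩ := Finset.card_eq_one.1 hc₂1
        have hwmem : w ∈ H₁.fixedVerts := hw ▸ Finset.mem_singleton_self w
        have hw'mem : w' ∈ H₂.fixedVerts := hw' ▸ Finset.mem_singleton_self w'
        have hww : w' = w := by
          by_contra hne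
          have h2c : 2 ≤ G₀.fixedVerts.card := Finset.one_lt_card.2
            ⟨w', hfixsub hH₂G hw'mem, w, hfixsub hH₁G hwmem, hne⟩
          omega
        rw [hww] at hw'mem
        have hwV₁ : w ∈ H₁.verts := (Finset.mem_inter.1 hwmem).1
        have hwV₂ : w ∈ H₂.verts := (Finset.mem_inter.1 hw'mem).1
        have hwfix : w ∈ G.fixed := (Finset.mem_inter.1 hwmem).2
        have hcF1 : 1 ≤ (edgeSpan G F).fixedVerts.card :=
          Finset.card_pos.2 ⟨w, hfix₁ hwmem⟩
        by_cases hwsp : w ∈ (edgeSpan G Ei).verts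
        · have : 1 ≤ (edgeSpan G Ei).fixedVerts.card :=
            Finset.card_pos.2 ⟨w, Finset.mem_inter.2 ⟨hwsp, hwfix⟩⟩
          omega
        · have hsub' : (edgeSpan G Ei).verts ⊆ (H₁.verts ∩ H₂.verts).erase w := by
            intro x hx
            exact Finset.mem_erase.2 ⟨fun h => hwsp (h ▸ hx), hspanIsub hx⟩
          have h3 := Finset.card_le_card hsub'
          rw [Finset.card_erase_of_mem (Finset.mem_inter.2 ⟨hwV₁, hwV₂⟩)] at h3
          have h4 : 1 ≤ (H₁.verts ∩ H₂.verts).card :=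
            Finset.card_pos.2 ⟨w, Finset.mem_inter.2 ⟨hwV₁, hwV₂⟩⟩
          omega
  -- alpha K₂ bound
  have hα₂le : alpha G k j (H₂.addEdge f₂) ≤ 3 - 2 * ((H₂.fixedVerts.card : ℤ)) := by
    have := alpha_le (G := G) (k := k) (j := j) hcK₂le
    rwa [hK₂c] at this
  -- final arithmetic
  have hfixF : (edgeSpan G F).fixedVerts.card ≤ (edgeSpan G F).verts.card :=
    Finset.card_le_card Finset.inter_subset_left
  omega

end MainAux

section Final

lemma sameEdge_symm {V E Γ : Type} [Group Γ] {G : GainedGraph V E Γ} {f g : E}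
    (h : SameEdge G f g) : SameEdge G g f := by
  rcases h with ⟨h1, h2, h3⟩ | ⟨h1, h2, h3⟩
  · exact Or.inl ⟨h1.symm, h2.symm, h3.symm⟩
  · exact Or.inr ⟨h2.symm, h1.symm, by rw [h3, inv_inv]⟩

end Final


/-- If the blockers `H₁, H₂` of two different 1-reductions at `v`
(adding `f₁` and `f₂`) satisfy `E(H₁ ∩ H₂) ≠ ∅`, then neither `H₁` nor `H₂` is a
general-count blocker, i.e. `α_k^j(H_i + f_i) ≠ 3 − 2|V₀(H_i)|`. -/
theorem no_general_count_blocker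
    {V E : Type} [DecidableEq V] [DecidableEq E] [Fintype V] [Fintype E]
    (k j : ℕ) (hk : 4 ≤ k) (hj2 : 2 ≤ j) (hjk : j ≤ k - 2)
    (G : GainedGraph V E (Multiplicative (ZMod k)))
    (G₀ : Subgraph G) (hG₀ : IsGainGraphOn G G₀)
    (htight : GainTightKJ G k j G₀)
    (v : V) (hv : v ∈ G₀.verts) (hvfree : v ∉ G.fixed)
    (hdeg : degree G G₀ v = 3) (hloop : ¬ HasLoopAt G G₀ v)
    (f₁ f₂ : E) (hf₁ : IsOneReduction G G₀ v f₁) (hf₂ : IsOneReduction G G₀ v f₂)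
    (hw₁ : IsGainGraphOn G (reduceAt G G₀ v f₁))
    (hw₂ : IsGainGraphOn G (reduceAt G G₀ v f₂))
    (hdiff : ¬ SameEdge G f₁ f₂)
    (H₁ H₂ : Subgraph G)
    (hb₁ : IsBlocker G k j G₀ v f₁ H₁) (hb₂ : IsBlocker G k j G₀ v f₂ H₂)
    (hE : ((H₁.inter H₂).edges).Nonempty) :
    alpha G k j (H₁.addEdge f₁) ≠ 3 - 2 * (H₁.fixedVerts.card : ℤ) ∧
      alpha G k j (H₂.addEdge f₂) ≠ 3 - 2 * (H₂.fixedVerts.card : ℤ) := by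
  have hE' : ((H₂.inter H₁).edges).Nonempty := by
    have : (H₂.inter H₁).edges = (H₁.inter H₂).edges := Finset.inter_comm _ _
    rw [this]
    exact hE
  have hdiff' : ¬ SameEdge G f₂ f₁ := fun h => hdiff (sameEdge_symm h)
  exact ⟨main_aux k j hk G G₀ hG₀ htight v hdeg hloop f₁ f₂ hf₁ hf₂ hdiff H₁ H₂ hb₁ hb₂ hE,
    main_aux k j hk G G₀ hG₀ htight v hdeg hloop f₂ f₁ hf₂ hf₁ hdiff' H₂ H₁ hb₂ hb₁ hE'⟩

end GR
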